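/- In the t-BMW algebra K_{n+1}, one has f_n f_{n-1} g_n = f_n f_{n-1} g_n e_n = e_{n-1} h_n e_{n-1} g_{n-1}^{-1}. -/
import Mathlib


/-- In the t-BMW algebra `K_{n+1}`, one has
`f_n f_{n-1} g_n = f_n f_{n-1} g_n e_n = e_{n-1} h_n e_{n-1} g_{n-1}⁻¹`. -/
theorem tBMW_reductions2_iii {A : Type*} [Ring A]
    (gm gmInv gn hm hn em en fm fn : A)
    (hgmi : gm * gmInv = 1) (higm : gmInv * gm = 1)
    -- f_n f_{n-1} = e_{n-1} h_n h_{n-1} e_n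
    (hff : fn * fm = em * hn * hm * en)
    (heg : en * gn = gn * en)
    -- h_n h_{n-1} g_n = h_n g_{n-1}⁻¹
    (hhhg : hn * hm * gn = hn * gmInv)
    (henh : en * hn = hn) (hhen : hn * en = hn)
    -- e_n g_{n-1}⁻¹ e_n = e_n e_{n-1} g_{n-1}⁻¹   (from (5.17))
    (hege : en * gmInv * en = en * em * gmInv)
    (hee : en * en = en) :
    fn * fm * gn = fn * fm * gn * en ∧ fn * fm * gn = em * hn * em * gmInv := by
  have key : fn * fm * gn = em * hn * gmInv * en := by
    calc fn * fm * gn = em * hn * (hm * (en * gn)) := by rw [hff]; noncomm_ring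
      _ = em * (hn * hm * gn) * en := by rw [heg]; noncomm_ring
      _ = em * hn * gmInv * en := by rw [hhhg]; noncomm_ring
  constructor
  · rw [key, mul_assoc _ en en, hee]
  · calc fn * fm * gn = em * (hn * en) * gmInv * en := by rw [hhen, key]
      _ = em * hn * (en * gmInv * en) := by noncomm_ring
      _ = em * hn * (en * em * gmInv) := by rw [hege]
      _ = em * (hn * en) * em * gmInv := by noncomm_ring
      _ = em * hn * em * gmInv := by rw [hhen]
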